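/- Let P ∈ ℤ[x] be a polynomial of degree d ≥ 2 with at least two distinct complex roots, and let k be a positive integer. Then the number of tuples (x_1,…,x_k,y_1,…,y_k) ∈ {1,…,N}^{2k} with min(x_1,…,x_k,y_1,…,y_k) ≤ n_0 (for any fixed n_0) satisfying P(x_1)···P(x_k) = P(y_1)···P(y_k) ≠ 0 is O_{P,k,n_0,ε}(N^{k−1+ε}), using the divisor bound τ(m) ≪_ε m^ε. -/

import Mathlib

open Finset Polynomial


-- key per-prime bound
lemma prime_factor_bound (ε : ℝ) (hε : 0 < ε) (p a : ℕ) (hp : 2 ≤ p) :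
    ((a : ℝ) + 1) ≤ (if (p:ℝ) ^ ε < 2 then (1 + 2 / (ε * Real.log 2)) else 1) * (p:ℝ) ^ ((a:ℝ) * ε) := by
  have hL0 : 0 < ε * Real.log 2 := mul_pos hε (Real.log_pos (by norm_num))
  have hp0 : (0:ℝ) < p := by positivity
  have h2p : (2:ℝ) ≤ p := by exact_mod_cast hp
  by_cases h : (p:ℝ) ^ ε < 2
  · simp only [h, if_pos]
    have h1 : (p:ℝ) ^ ((a:ℝ) * ε) ≥ (2:ℝ) ^ ((a:ℝ) * ε) :=
      Real.rpow_le_rpow (by norm_num) h2p (by positivity)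
    have h2 : (2:ℝ) ^ ((a:ℝ) * ε) = Real.exp ((a:ℝ) * ε * Real.log 2) := by
      rw [Real.rpow_def_of_pos (by norm_num)]; ring_nf
    have h3 : 1 + (a:ℝ) * ε * Real.log 2 ≤ (2:ℝ) ^ ((a:ℝ) * ε) := by
      rw [h2]
      have := Real.add_one_le_exp ((a:ℝ) * ε * Real.log 2)
      linarith
    have ha0 : (0:ℝ) ≤ a := Nat.cast_nonneg a
    set x : ℝ := (a:ℝ) * ε * Real.log 2 with hx
    set l : ℝ := ε * Real.log 2 with hl
    have hx0 : 0 ≤ x := by positivity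
    -- (1 + 2/l) * (1 + x) ≥ 1 + a,  where a = x / l
    have key : (a:ℝ) + 1 ≤ (1 + 2 / l) * (1 + x) := by
      have hax : (a:ℝ) * l = x := by rw [hx, hl]; ring
      have h4 : (a:ℝ) * l ≤ 2 * x := by rw [hax]; linarith
      have h4' : (a:ℝ) ≤ 2 * x / l := by
        rw [le_div_iff₀ hL0]; linarith
      have h5 : (1 + 2 / l) * (1 + x) = 1 + 2/l + x + 2*x/l := by ring
      rw [h5]
      have : 0 < 2 / l := by positivity
      linarith
    calc (a:ℝ) + 1 ≤ (1 + 2 / l) * (1 + x) := key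
      _ ≤ (1 + 2 / l) * ((2:ℝ) ^ ((a:ℝ) * ε)) := by
          apply mul_le_mul_of_nonneg_left _ (by positivity)
          rw [hx]; linarith
      _ ≤ (1 + 2 / l) * (p:ℝ) ^ ((a:ℝ) * ε) := by
          apply mul_le_mul_of_nonneg_left h1 (by positivity)
  · rw [if_neg h, one_mul]
    push_neg at h
    have h2 : (p:ℝ) ^ ((a:ℝ) * ε) = ((p:ℝ) ^ ε) ^ (a:ℕ) := by
      rw [← Real.rpow_natCast ((p:ℝ)^ε) a, ← Real.rpow_mul (le_of_lt hp0)]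
      ring_nf
    rw [h2]
    calc ((a:ℝ) + 1) ≤ (2:ℝ) ^ (a:ℕ) := by
          exact_mod_cast Nat.succ_le_of_lt (Nat.lt_two_pow_self (n := a))
      _ ≤ ((p:ℝ) ^ ε) ^ (a:ℕ) := pow_le_pow_left₀ (by norm_num) h a

lemma divisor_bound (ε : ℝ) (hε : 0 < ε) :
    ∃ C : ℝ, 1 ≤ C ∧ ∀ n : ℕ, n ≠ 0 → (n.divisors.card : ℝ) ≤ C * (n : ℝ) ^ ε := by
  classical
  have hL0 : 0 < ε * Real.log 2 := mul_pos hε (Real.log_pos (by norm_num))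
  set M : ℝ := 1 + 2 / (ε * Real.log 2) with hM
  have hM1 : 1 ≤ M := by
    have : 0 < 2 / (ε * Real.log 2) := by positivity
    rw [hM]; linarith
  set K : ℕ := ⌈(2:ℝ) ^ (1/ε)⌉₊ + 1 with hK
  have hM0 : 0 ≤ M := by linarith
  refine ⟨M ^ K, one_le_pow₀ hM1, ?_⟩
  intro n hn
  rw [Nat.card_divisors hn]
  push_cast
  have hnval : (n : ℝ) = ∏ p ∈ n.primeFactors, (p:ℝ) ^ (n.factorization p) := by
    conv_lhs => rw [← Nat.factorization_prod_pow_eq_self hn]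
    rw [Nat.prod_factorization_eq_prod_primeFactors]
    push_cast
    rfl
  have hrp : (n : ℝ) ^ ε = ∏ p ∈ n.primeFactors, (p:ℝ) ^ ((n.factorization p : ℝ) * ε) := by
    rw [hnval, ← Real.finset_prod_rpow _ _ (fun p _ => by positivity)]
    apply Finset.prod_congr rfl
    intro p hp
    rw [← Real.rpow_natCast (p:ℝ) (n.factorization p), ← Real.rpow_mul (by positivity)]
  calc (∏ p ∈ n.primeFactors, ((n.factorization p : ℝ) + 1))
      ≤ ∏ p ∈ n.primeFactors,
          ((if (p:ℝ) ^ ε < 2 then M else 1) * (p:ℝ) ^ ((n.factorization p : ℝ) * ε)) := by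
        apply Finset.prod_le_prod (fun p _ => by positivity)
        intro p hp
        exact prime_factor_bound ε hε p _ (Nat.prime_of_mem_primeFactors hp).two_le
    _ = (∏ p ∈ n.primeFactors, (if (p:ℝ) ^ ε < 2 then M else 1)) * ((n:ℝ) ^ ε) := by
        rw [Finset.prod_mul_distrib, hrp]
    _ ≤ M ^ K * (n:ℝ) ^ ε := by
        apply mul_le_mul_of_nonneg_right _ (by positivity)
        rw [Finset.prod_ite _ _]
        rw [Finset.prod_const, Finset.prod_const, one_pow, mul_one]
        apply pow_le_pow_right₀ hM1
        have hsub : (n.primeFactors.filter (fun (p : ℕ) => (p:ℝ) ^ ε < 2)) ⊆ Finset.range K := by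
          intro p hp
          rw [Finset.mem_filter] at hp
          rw [Finset.mem_range, hK]
          have hp2 : (2:ℝ) ≤ (p:ℝ) := by
            exact_mod_cast (Nat.prime_of_mem_primeFactors hp.1).two_le
          have hlt : (p:ℝ) < (2:ℝ) ^ (1/ε) := by
            have h1 : ((p:ℝ) ^ ε) ^ (1/ε) < (2:ℝ) ^ (1/ε) :=
              Real.rpow_lt_rpow (by positivity) hp.2 (by positivity)
            rwa [← Real.rpow_mul (by linarith), mul_one_div, div_self (ne_of_gt hε),
              Real.rpow_one] at h1
          have := Nat.lt_ceil.mpr hlt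
          omega
        calc (n.primeFactors.filter (fun (p : ℕ) => (p:ℝ) ^ ε < 2)).card
            ≤ (Finset.range K).card := Finset.card_le_card hsub
          _ = K := Finset.card_range K


lemma eval_fiber_card (P : Polynomial ℤ) (hP : P.natDegree ≠ 0) (v : ℤ) (s : Finset ℕ)
    [DecidablePred fun y : ℕ => P.eval (y:ℤ) = v] :
    (s.filter (fun y : ℕ => P.eval (y:ℤ) = v)).card ≤ P.natDegree := by
  classical
  set Q : Polynomial ℤ := P - C v with hQ
  have hQ0 : Q ≠ 0 := by
    intro h
    have : P = C v := by rwa [hQ, sub_eq_zero] at h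
    rw [this, natDegree_C] at hP; exact hP rfl
  have hQd : Q.natDegree = P.natDegree := natDegree_sub_C
  have hinj : Set.InjOn (fun y : ℕ => (y : ℤ)) (s.filter (fun y : ℕ => P.eval (y:ℤ) = v)) :=
    fun a _ b _ h => Nat.cast_injective h
  have hmaps : ∀ y ∈ s.filter (fun y : ℕ => P.eval (y:ℤ) = v),
      (y : ℤ) ∈ Q.roots.toFinset := by
    intro y hy
    rw [Finset.mem_filter] at hy
    rw [Multiset.mem_toFinset, mem_roots hQ0]
    simp [hQ, IsRoot, hy.2]
  calc (s.filter (fun y : ℕ => P.eval (y:ℤ) = v)).card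
      ≤ Q.roots.toFinset.card := Finset.card_le_card_of_injOn _ hmaps hinj
    _ ≤ Multiset.card Q.roots := Multiset.toFinset_card_le _
    _ ≤ Q.natDegree := Q.card_roots'
    _ = P.natDegree := hQd

lemma eval_abs_bound (P : Polynomial ℤ) (N : ℕ) (hN : 1 ≤ N) (x : ℕ) (hx1 : 1 ≤ x) (hxN : x ≤ N) :
    |P.eval (x:ℤ)| ≤ (∑ i ∈ Finset.range (P.natDegree + 1), |P.coeff i|) * (N:ℤ) ^ P.natDegree := by
  rw [Polynomial.eval_eq_sum_range]
  rw [Finset.sum_mul]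
  refine (Finset.abs_sum_le_sum_abs _ _).trans (Finset.sum_le_sum ?_)
  intro i hi
  rw [abs_mul, abs_pow]
  apply mul_le_mul_of_nonneg_left _ (abs_nonneg _)
  have hx : |(x:ℤ)| = (x:ℤ) := abs_of_nonneg (by positivity)
  rw [hx]
  calc (x:ℤ) ^ i ≤ (N:ℤ) ^ i := pow_le_pow_left₀ (by positivity) (by exact_mod_cast hxN) i
    _ ≤ (N:ℤ) ^ P.natDegree := by
        apply pow_le_pow_right₀ (by exact_mod_cast hN)
        simpa [Nat.lt_succ] using hi



lemma Dcard_bound (P : Polynomial ℤ) (hP : P.natDegree ≠ 0) (N : ℕ) (m : ℤ) (hm : m ≠ 0) :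
    (((Finset.Icc 1 N).filter (fun y : ℕ => P.eval (y:ℤ) ∣ m)).card)
      ≤ 2 * P.natDegree * m.natAbs.divisors.card := by
  classical
  set s : Finset ℕ := (Finset.Icc 1 N).filter (fun y : ℕ => P.eval (y:ℤ) ∣ m) with hs
  set f : ℕ → ℕ := fun y => (P.eval (y:ℤ)).natAbs with hf
  have h1 : s.card ≤ 2 * P.natDegree * (s.image f).card := by
    apply Finset.card_le_mul_card_image
    intro a ha
    have hsub : s.filter (fun y => f y = a) ⊆
        ((Finset.Icc 1 N).filter (fun y : ℕ => P.eval (y:ℤ) = (a:ℤ))) ∪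
        ((Finset.Icc 1 N).filter (fun y : ℕ => P.eval (y:ℤ) = -(a:ℤ))) := by
      intro y hy
      rw [Finset.mem_filter, hs, Finset.mem_filter] at hy
      obtain ⟨⟨hy1, _⟩, hy2⟩ := hy
      rw [Finset.mem_union, Finset.mem_filter, Finset.mem_filter]
      rcases Int.natAbs_eq_iff.mp hy2 with h | h
      · exact Or.inl ⟨hy1, h⟩
      · exact Or.inr ⟨hy1, h⟩
    calc (s.filter (fun y => f y = a)).card ≤ _ := Finset.card_le_card hsub
      _ ≤ _ := Finset.card_union_le _ _
      _ ≤ 2 * P.natDegree := by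
          have := eval_fiber_card P hP (a:ℤ) (Finset.Icc 1 N)
          have := eval_fiber_card P hP (-(a:ℤ)) (Finset.Icc 1 N)
          omega
  have h2 : s.image f ⊆ m.natAbs.divisors := by
    intro a ha
    obtain ⟨y, hy, hya⟩ := Finset.mem_image.mp ha
    rw [hs, Finset.mem_filter] at hy
    rw [Nat.mem_divisors]
    exact ⟨hya ▸ Int.natAbs_dvd_natAbs.mpr hy.2, Int.natAbs_ne_zero.mpr hm⟩
  calc s.card ≤ 2 * P.natDegree * (s.image f).card := h1
    _ ≤ 2 * P.natDegree * m.natAbs.divisors.card :=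
        Nat.mul_le_mul_left _ (Finset.card_le_card h2)


lemma main_count (P : Polynomial ℤ) (k n₀ N : ℕ) (R : ℝ) (hR : 0 ≤ R)
    (H : Finset ((Fin k → ℕ) × (Fin k → ℕ)))
    (hH : ∀ t ∈ H, (∀ i, t.1 i ∈ Finset.Icc 1 N) ∧ (∀ i, t.2 i ∈ Finset.Icc 1 N) ∧
      (∃ i, t.1 i ≤ n₀) ∧ (∏ i, P.eval (t.1 i : ℤ)) = (∏ i, P.eval (t.2 i : ℤ)) ∧
      (∏ i, P.eval (t.1 i : ℤ)) ≠ 0)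
    (hD : ∀ x : Fin k → ℕ, (∀ i, x i ∈ Finset.Icc 1 N) → (∏ i, P.eval (x i : ℤ)) ≠ 0 →
      (((Finset.Icc 1 N).filter (fun y : ℕ => P.eval (y:ℤ) ∣ ∏ i, P.eval (x i : ℤ))).card : ℝ) ≤ R) :
    (H.card : ℝ) ≤ (k * n₀ * N ^ (k - 1) : ℕ) * R ^ k := by
  classical
  set X : Finset (Fin k → ℕ) := H.image Prod.fst with hX
  have hfib : H.card = ∑ x ∈ X, (H.filter (fun t => t.1 = x)).card :=
    Finset.card_eq_sum_card_fiberwise (fun t ht => Finset.mem_image_of_mem _ ht)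
  -- each fiber
  have hfibR : ∀ x ∈ X, ((H.filter (fun t => t.1 = x)).card : ℝ) ≤ R ^ k := by
    intro x hx
    obtain ⟨t₀, ht₀, ht₀x⟩ := Finset.mem_image.mp hx
    obtain ⟨h1, h2, h3, h4, h5⟩ := hH t₀ ht₀
    rw [ht₀x] at h1 h5
    set m : ℤ := ∏ i, P.eval (x i : ℤ) with hm
    set Dm : Finset ℕ := (Finset.Icc 1 N).filter (fun y : ℕ => P.eval (y:ℤ) ∣ m) with hDm
    have hcard : (H.filter (fun t => t.1 = x)).card ≤ Dm.card ^ k := by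
      have : (H.filter (fun t => t.1 = x)).card ≤ (Fintype.piFinset (fun _ : Fin k => Dm)).card := by
        apply Finset.card_le_card_of_injOn (fun t => t.2)
        · intro t ht
          rw [Finset.mem_coe, Finset.mem_filter] at ht
          obtain ⟨g1, g2, g3, g4, g5⟩ := hH t ht.1
          rw [Finset.mem_coe, Fintype.mem_piFinset]
          intro j
          rw [hDm, Finset.mem_filter]
          refine ⟨g2 j, ?_⟩
          have : (∏ i, P.eval (t.2 i : ℤ)) = m := by rw [← g4, ht.2, hm]
          rw [← this]
          exact Finset.dvd_prod_of_mem _ (Finset.mem_univ j)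
        · intro a ha b hb hab
          simp only [Finset.coe_filter, Set.mem_setOf_eq] at ha hb
          exact Prod.ext (ha.2.trans hb.2.symm) hab
      calc _ ≤ (Fintype.piFinset (fun _ : Fin k => Dm)).card := this
        _ = Dm.card ^ k := by
            rw [Fintype.card_piFinset]
            simp
    calc ((H.filter (fun t => t.1 = x)).card : ℝ) ≤ ((Dm.card ^ k : ℕ) : ℝ) := by exact_mod_cast hcard
      _ = ((Dm.card : ℝ)) ^ k := by push_cast; ring
      _ ≤ R ^ k := pow_le_pow_left₀ (by positivity) (hD x h1 h5) k
  -- X is small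
  have hXcard : X.card ≤ k * n₀ * N ^ (k - 1) := by
    have hsub : X ⊆ Finset.univ.biUnion (fun i : Fin k =>
        Fintype.piFinset (fun j => if j = i then Finset.Icc 1 (min n₀ N) else Finset.Icc 1 N)) := by
      intro x hx
      obtain ⟨t₀, ht₀, ht₀x⟩ := Finset.mem_image.mp hx
      obtain ⟨h1, _, h3, _, _⟩ := hH t₀ ht₀
      rw [ht₀x] at h1 h3
      obtain ⟨i, hi⟩ := h3
      rw [Finset.mem_biUnion]
      refine ⟨i, Finset.mem_univ i, ?_⟩
      rw [Fintype.mem_piFinset]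
      intro j
      by_cases hj : j = i
      · subst hj
        rw [if_pos rfl, Finset.mem_Icc]
        have := Finset.mem_Icc.mp (h1 j)
        exact ⟨this.1, le_min hi this.2⟩
      · simp only [if_neg hj]
        exact h1 j
    calc X.card ≤ _ := Finset.card_le_card hsub
      _ ≤ ∑ i : Fin k, (Fintype.piFinset (fun j => if j = i then Finset.Icc 1 (min n₀ N)
            else Finset.Icc 1 N)).card := Finset.card_biUnion_le
      _ ≤ ∑ _i : Fin k, n₀ * N ^ (k - 1) := by
          apply Finset.sum_le_sum
          intro i _
          rw [Fintype.card_piFinset]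
          have : ∀ j : Fin k, (if j = i then Finset.Icc 1 (min n₀ N) else Finset.Icc 1 N).card
              = if j = i then (min n₀ N) else N := by
            intro j; by_cases hj : j = i <;> simp [hj]
          rw [Finset.prod_congr rfl (fun j _ => this j)]
          rw [← Finset.mul_prod_erase Finset.univ _ (Finset.mem_univ i), if_pos rfl]
          have h2 : ∏ j ∈ Finset.univ.erase i, (if j = i then (min n₀ N) else N) = N ^ (k - 1) := by
            rw [Finset.prod_congr rfl (fun j hj => if_neg (Finset.mem_erase.mp hj).1)]
            rw [Finset.prod_const, Finset.card_erase_of_mem (Finset.mem_univ i)]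
            simp
          rw [h2]
          exact Nat.mul_le_mul_right _ (min_le_left _ _)
      _ = k * (n₀ * N ^ (k - 1)) := by simp [Finset.sum_const, mul_comm]
      _ = k * n₀ * N ^ (k - 1) := by ring
  calc (H.card : ℝ) = ∑ x ∈ X, ((H.filter (fun t => t.1 = x)).card : ℝ) := by
        rw [hfib]; push_cast; rfl
    _ ≤ ∑ _x ∈ X, R ^ k := Finset.sum_le_sum hfibR
    _ = X.card * R ^ k := by rw [Finset.sum_const]; simp [nsmul_eq_mul]
    _ ≤ (k * n₀ * N ^ (k - 1) : ℕ) * R ^ k := by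
        apply mul_le_mul_of_nonneg_right _ (by positivity)
        exact_mod_cast hXcard


theorem stmt_10 (P : Polynomial ℤ) (hd : 2 ≤ P.natDegree)
    (hroots : 2 ≤ (P.map (Int.castRingHom ℂ)).roots.toFinset.card)
    (k : ℕ) (hk : 1 ≤ k) (n₀ : ℕ) :
    ∀ ε : ℝ, 0 < ε → ∃ C : ℝ, 0 < C ∧ ∀ N : ℕ, 1 ≤ N →
      (Nat.card {t : (Fin k → ℕ) × (Fin k → ℕ) //
          (∀ i, t.1 i ∈ Finset.Icc 1 N) ∧ (∀ i, t.2 i ∈ Finset.Icc 1 N) ∧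
          (∃ i, t.1 i ≤ n₀ ∨ t.2 i ≤ n₀) ∧
          (∏ i, P.eval (t.1 i : ℤ)) = (∏ i, P.eval (t.2 i : ℤ)) ∧
          (∏ i, P.eval (t.1 i : ℤ)) ≠ 0} : ℝ)
        ≤ C * (N : ℝ) ^ ((k : ℝ) - 1 + ε) := by
  classical
  intro ε hε
  set d : ℕ := P.natDegree with hdd
  have hd0 : d ≠ 0 := by omega
  have hP0 : P ≠ 0 := fun h => hd0 (by rw [hdd, h, Polynomial.natDegree_zero])
  set A : ℤ := ∑ i ∈ Finset.range (d + 1), |P.coeff i| with hA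
  have hA1 : 1 ≤ A := by
    have hld : P.coeff d ≠ 0 := by
      rw [hdd]; exact Polynomial.leadingCoeff_ne_zero.mpr hP0
    calc (1:ℤ) ≤ |P.coeff d| := Int.one_le_abs hld
      _ ≤ A := by
          rw [hA]
          exact Finset.single_le_sum (f := fun i => |P.coeff i|) (fun i _ => abs_nonneg _)
            (Finset.mem_range.mpr (Nat.lt_succ_self d))
  have hA0 : (0:ℝ) < (A:ℝ) := by exact_mod_cast lt_of_lt_of_le one_pos (by exact_mod_cast hA1)
  set ε' : ℝ := ε / ((d:ℝ) * (k:ℝ)^2) with hε'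
  have hdk0 : (0:ℝ) < (d:ℝ) * (k:ℝ)^2 := by
    have : (0:ℝ) < (d:ℝ) := by exact_mod_cast Nat.pos_of_ne_zero hd0
    have : (0:ℝ) < (k:ℝ) := by exact_mod_cast hk
    positivity
  have hε'0 : 0 < ε' := div_pos hε hdk0
  obtain ⟨C₁, hC₁1, hC₁⟩ := divisor_bound ε' hε'0
  have hC₁0 : (0:ℝ) < C₁ := lt_of_lt_of_le one_pos hC₁1
  set C₀ : ℝ := 2 * (k:ℝ) * (n₀:ℝ) * (2*(d:ℝ)*C₁)^k * (A:ℝ) ^ ((k:ℝ)^2*ε') with hC₀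
  refine ⟨max C₀ 1, lt_of_lt_of_le one_pos (le_max_right _ _), ?_⟩
  intro N hN
  have hN0 : (0:ℝ) < (N:ℝ) := by exact_mod_cast hN
  set R : ℝ := 2*(d:ℝ)*C₁ * ((A:ℝ) * (N:ℝ)^(d:ℕ)) ^ ((k:ℝ)*ε') with hRdef
  have hbase0 : (0:ℝ) < (A:ℝ) * (N:ℝ)^(d:ℕ) := by positivity
  have hR0 : (0:ℝ) ≤ R := by
    rw [hRdef]
    have : (0:ℝ) ≤ ((A:ℝ) * (N:ℝ)^(d:ℕ)) ^ ((k:ℝ)*ε') := Real.rpow_nonneg hbase0.le _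
    have hd0' : (0:ℝ) ≤ (d:ℝ) := Nat.cast_nonneg d
    positivity
  -- the divisor-set bound
  have hD : ∀ x : Fin k → ℕ, (∀ i, x i ∈ Finset.Icc 1 N) → (∏ i, P.eval (x i : ℤ)) ≠ 0 →
      (((Finset.Icc 1 N).filter (fun y : ℕ => P.eval (y:ℤ) ∣ ∏ i, P.eval (x i : ℤ))).card : ℝ)
        ≤ R := by
    intro x hx hm
    set m : ℤ := ∏ i, P.eval (x i : ℤ) with hm'
    have habs : |m| ≤ ((A * (N:ℤ)^(d:ℕ)))^k := by
      rw [hm', Finset.abs_prod]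
      calc ∏ i, |P.eval (x i : ℤ)| ≤ ∏ _i : Fin k, (A * (N:ℤ)^(d:ℕ)) := by
            apply Finset.prod_le_prod (fun i _ => abs_nonneg _)
            intro i _
            have hxi := Finset.mem_Icc.mp (hx i)
            exact eval_abs_bound P N hN (x i) hxi.1 hxi.2
        _ = (A * (N:ℤ)^(d:ℕ))^k := by rw [Finset.prod_const]; simp
    have hnat : ((m.natAbs : ℝ)) ≤ ((A:ℝ) * (N:ℝ)^(d:ℕ))^(k:ℕ) := by
      rw [Nat.cast_natAbs]
      exact_mod_cast habs
    have hτ : (m.natAbs.divisors.card : ℝ) ≤ C₁ * ((A:ℝ) * (N:ℝ)^(d:ℕ)) ^ ((k:ℝ)*ε') := by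
      calc (m.natAbs.divisors.card : ℝ) ≤ C₁ * (m.natAbs : ℝ) ^ ε' :=
            hC₁ m.natAbs (Int.natAbs_ne_zero.mpr hm)
        _ ≤ C₁ * (((A:ℝ) * (N:ℝ)^(d:ℕ))^(k:ℕ)) ^ ε' := by
            apply mul_le_mul_of_nonneg_left _ hC₁0.le
            exact Real.rpow_le_rpow (Nat.cast_nonneg _) hnat hε'0.le
        _ = C₁ * ((A:ℝ) * (N:ℝ)^(d:ℕ)) ^ ((k:ℝ)*ε') := by
            rw [← Real.rpow_natCast ((A:ℝ) * (N:ℝ)^(d:ℕ)) k, ← Real.rpow_mul hbase0.le]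
    calc (((Finset.Icc 1 N).filter (fun y : ℕ => P.eval (y:ℤ) ∣ m)).card : ℝ)
        ≤ ((2 * d * m.natAbs.divisors.card : ℕ) : ℝ) := by
          exact_mod_cast Dcard_bound P hd0 N m hm
      _ = 2 * (d:ℝ) * (m.natAbs.divisors.card : ℝ) := by push_cast; ring
      _ ≤ 2 * (d:ℝ) * (C₁ * ((A:ℝ) * (N:ℝ)^(d:ℕ)) ^ ((k:ℝ)*ε')) := by
          apply mul_le_mul_of_nonneg_left hτ (by positivity)
      _ = R := by rw [hRdef]; ring
  -- the finite set
  set pi2 : Finset ((Fin k → ℕ) × (Fin k → ℕ)) :=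
    (Fintype.piFinset fun _ : Fin k => Finset.Icc 1 N) ×ˢ
    (Fintype.piFinset fun _ : Fin k => Finset.Icc 1 N) with hpi2
  set F : Finset ((Fin k → ℕ) × (Fin k → ℕ)) :=
    pi2.filter (fun t => (∃ i, t.1 i ≤ n₀ ∨ t.2 i ≤ n₀) ∧
      (∏ i, P.eval (t.1 i : ℤ)) = (∏ i, P.eval (t.2 i : ℤ)) ∧
      (∏ i, P.eval (t.1 i : ℤ)) ≠ 0) with hF
  have hmemF : ∀ t, t ∈ F ↔ ((∀ i, t.1 i ∈ Finset.Icc 1 N) ∧ (∀ i, t.2 i ∈ Finset.Icc 1 N) ∧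
      (∃ i, t.1 i ≤ n₀ ∨ t.2 i ≤ n₀) ∧
      (∏ i, P.eval (t.1 i : ℤ)) = (∏ i, P.eval (t.2 i : ℤ)) ∧
      (∏ i, P.eval (t.1 i : ℤ)) ≠ 0) := by
    intro t
    rw [hF, Finset.mem_filter, hpi2, Finset.mem_product, Fintype.mem_piFinset,
      Fintype.mem_piFinset]
    exact and_assoc
  have hScard : Nat.card {t : (Fin k → ℕ) × (Fin k → ℕ) //
      (∀ i, t.1 i ∈ Finset.Icc 1 N) ∧ (∀ i, t.2 i ∈ Finset.Icc 1 N) ∧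
      (∃ i, t.1 i ≤ n₀ ∨ t.2 i ≤ n₀) ∧
      (∏ i, P.eval (t.1 i : ℤ)) = (∏ i, P.eval (t.2 i : ℤ)) ∧
      (∏ i, P.eval (t.1 i : ℤ)) ≠ 0} = F.card := by
    rw [← Nat.card_eq_finsetCard]
    exact Nat.card_congr (Equiv.subtypeEquivRight (fun t => (hmemF t).symm))
  -- split into two halves
  set G₁ : Finset ((Fin k → ℕ) × (Fin k → ℕ)) := F.filter (fun t => ∃ i, t.1 i ≤ n₀) with hG₁
  set G₂ : Finset ((Fin k → ℕ) × (Fin k → ℕ)) := F.filter (fun t => ∃ i, t.2 i ≤ n₀) with hG₂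
  have hsplit : F.card ≤ G₁.card + G₂.card := by
    calc F.card ≤ (G₁ ∪ G₂).card := by
          apply Finset.card_le_card
          intro t ht
          have h := (hmemF t).mp ht
          obtain ⟨i, hi | hi⟩ := h.2.2.1
          · exact Finset.mem_union_left _ (Finset.mem_filter.mpr ⟨ht, ⟨i, hi⟩⟩)
          · exact Finset.mem_union_right _ (Finset.mem_filter.mpr ⟨ht, ⟨i, hi⟩⟩)
      _ ≤ G₁.card + G₂.card := Finset.card_union_le _ _
  have hb1 : (G₁.card : ℝ) ≤ (k * n₀ * N ^ (k - 1) : ℕ) * R ^ k := by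
    apply main_count P k n₀ N R hR0 G₁ _ hD
    intro t ht
    rw [hG₁, Finset.mem_filter] at ht
    have h := (hmemF t).mp ht.1
    exact ⟨h.1, h.2.1, ht.2, h.2.2.2.1, h.2.2.2.2⟩
  have hb2 : (G₂.card : ℝ) ≤ (k * n₀ * N ^ (k - 1) : ℕ) * R ^ k := by
    have hcard : G₂.card = (G₂.image Prod.swap).card :=
      (Finset.card_image_of_injective _ Prod.swap_injective).symm
    rw [hcard]
    apply main_count P k n₀ N R hR0 _ _ hD
    intro t ht
    obtain ⟨t', ht', rfl⟩ := Finset.mem_image.mp ht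
    rw [hG₂, Finset.mem_filter] at ht'
    have h := (hmemF t').mp ht'.1
    exact ⟨h.2.1, h.1, ht'.2, (h.2.2.2.1).symm, h.2.2.2.1 ▸ h.2.2.2.2⟩
  -- final algebra
  have hk0' : ((k:ℝ)) ≠ 0 := by positivity
  have hd0' : ((d:ℝ)) ≠ 0 := by
    have : (0:ℝ) < (d:ℝ) := by exact_mod_cast Nat.pos_of_ne_zero hd0
    positivity
  have hNk1 : ((N:ℝ) ^ ((k - 1 : ℕ))) = (N:ℝ) ^ ((k:ℝ) - 1) := by
    rw [← Real.rpow_natCast (N:ℝ) (k-1)]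
    congr 1
    rw [Nat.cast_sub hk]
    norm_num
  have h2 : (((A:ℝ) * (N:ℝ)^(d:ℕ)) ^ ((k:ℝ)*ε'))^k = (A:ℝ)^((k:ℝ)^2*ε') * (N:ℝ)^ε := by
    rw [← Real.rpow_natCast (((A:ℝ) * (N:ℝ)^(d:ℕ)) ^ ((k:ℝ)*ε')) k,
      ← Real.rpow_mul hbase0.le, Real.mul_rpow hA0.le (by positivity)]
    congr 1
    · congr 1; ring
    · rw [← Real.rpow_natCast (N:ℝ) d, ← Real.rpow_mul hN0.le]
      congr 1
      rw [hε']
      field_simp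
  have hRk : R ^ k = (2*(d:ℝ)*C₁)^k * ((A:ℝ) ^ ((k:ℝ)^2*ε') * (N:ℝ) ^ ε) := by
    rw [hRdef, mul_pow, h2]
  calc (Nat.card _ : ℝ) = (F.card : ℝ) := by rw [hScard]
    _ ≤ (G₁.card : ℝ) + (G₂.card : ℝ) := by exact_mod_cast hsplit
    _ ≤ 2 * ((k * n₀ * N ^ (k - 1) : ℕ) * R ^ k) := by linarith
    _ = (2*(k:ℝ)*(n₀:ℝ)) * ((N:ℝ) ^ ((k - 1 : ℕ))) * R ^ k := by
        push_cast
        ring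
    _ = C₀ * ((N:ℝ) ^ ((k:ℝ) - 1) * (N:ℝ) ^ ε) := by
        rw [hNk1, hRk, hC₀]
        ring
    _ = C₀ * (N:ℝ) ^ ((k:ℝ) - 1 + ε) := by rw [← Real.rpow_add hN0]
    _ ≤ max C₀ 1 * (N:ℝ) ^ ((k:ℝ) - 1 + ε) := by
        apply mul_le_mul_of_nonneg_right (le_max_left _ _) (Real.rpow_nonneg hN0.le _)
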